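/- Let D ⊂ ℝ have finite positive Lebesgue measure m(D), and let X be a set of data values. Suppose H : D → ℝ and G : X × D → ℝ satisfy the centroid bounds 0 < c_{h,min} ≤ H(θ) ≤ c_{h,max} for all θ ∈ D and 0 < c_{g,min} ≤ G(x|θ) ≤ c_{g,max} for all x ∈ X, θ ∈ D, where c_{h,min}, c_{h,max}, c_{g,min}, c_{g,max} are positive constants. Define c_{gh,min} = c_{g,min} c_{h,min}, c_{gh,max} = c_{g,max} c_{h,max}, and the normalized posterior F(θ|x) = H(θ) G(x|θ) / ∫_D H(u) G(x|u) du. Then for all x ∈ X and θ ∈ D: c_{gh,min} / ( m(D) · c_{gh,max} ) ≤ F(θ|x) ≤ c_{gh,max} / ( m(D) · c_{gh,min} ). (Centroid-based bounds for the doubly fuzzy posterior.) -/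

import Mathlib

open MeasureTheory

/-- **Centroid-based bounds for the doubly fuzzy posterior.**
If the SAM prior approximator `H` and likelihood approximator `G` take values between
their (positive) minimal and maximal then-part centroids, then the doubly fuzzy
posterior `F(θ|x) = H(θ)G(x|θ)/∫_D H G` is bounded below by
`c_{gh,min}/(m(D)c_{gh,max})` and above by `c_{gh,max}/(m(D)c_{gh,min})`. -/
theorem centroid_bounds_doubly_fuzzy_posterior
    (D : Set ℝ) (hDm : MeasurableSet D)
    (hD_pos : 0 < volume D) (hD_fin : volume D < ⊤)
    {X : Type*} (H : ℝ → ℝ) (G : X → ℝ → ℝ)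
    (hH_meas : Measurable H) (hG_meas : ∀ x, Measurable (G x))
    (chmin chmax cgmin cgmax : ℝ)
    (hchmin : 0 < chmin) (hcgmin : 0 < cgmin)
    (hH_bdd : ∀ θ ∈ D, chmin ≤ H θ ∧ H θ ≤ chmax)
    (hG_bdd : ∀ x, ∀ θ ∈ D, cgmin ≤ G x θ ∧ G x θ ≤ cgmax) :
    ∀ x, ∀ θ ∈ D,
      (cgmin * chmin) / ((volume D).toReal * (cgmax * chmax)) ≤
          H θ * G x θ / (∫ u in D, H u * G x u) ∧
        H θ * G x θ / (∫ u in D, H u * G x u) ≤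
          (cgmax * chmax) / ((volume D).toReal * (cgmin * chmin)) := by
  intro x θ hθ
  set m := (volume D).toReal with hm
  have hm_pos : 0 < m := ENNReal.toReal_pos hD_pos.ne' hD_fin.ne
  have hchmax : 0 < chmax := hchmin.trans_le ((hH_bdd θ hθ).1.trans (hH_bdd θ hθ).2)
  have hcgmax : 0 < cgmax := hcgmin.trans_le ((hG_bdd x θ hθ).1.trans (hG_bdd x θ hθ).2)
  -- integrability of H * G x on D
  have hInt : IntegrableOn (fun u => H u * G x u) D volume := by
    apply Measure.integrableOn_of_bounded hD_fin.ne
      ((hH_meas.mul (hG_meas x)).aestronglyMeasurable)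
    filter_upwards [ae_restrict_mem hDm] with u hu
    have h1 := hH_bdd u hu
    have h2 := hG_bdd x u hu
    have : |H u * G x u| ≤ chmax * cgmax := by
      rw [abs_of_nonneg (mul_nonneg (hchmin.le.trans h1.1) (hcgmin.le.trans h2.1))]
      exact mul_le_mul h1.2 h2.2 (hcgmin.le.trans h2.1) hchmax.le
    simpa only [Real.norm_eq_abs, Pi.mul_apply] using this
  have hIntLow : IntegrableOn (fun _ : ℝ => chmin * cgmin) D volume :=
    integrableOn_const hD_fin.ne
  have hIntHigh : IntegrableOn (fun _ : ℝ => chmax * cgmax) D volume :=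
    integrableOn_const hD_fin.ne
  set I := ∫ u in D, H u * G x u with hI
  have hlow : m * (cgmin * chmin) ≤ I := by
    have := setIntegral_mono_on hIntLow hInt hDm (fun u hu =>
      mul_le_mul (hH_bdd u hu).1 (hG_bdd x u hu).1 hcgmin.le
        (hchmin.le.trans (hH_bdd u hu).1))
    rw [setIntegral_const] at this
    calc m * (cgmin * chmin) = m • (chmin * cgmin) := by ring_nf
      _ ≤ I := this
  have hhigh : I ≤ m * (cgmax * chmax) := by
    have := setIntegral_mono_on hInt hIntHigh hDm (fun u hu =>
      mul_le_mul (hH_bdd u hu).2 (hG_bdd x u hu).2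
        (hcgmin.le.trans (hG_bdd x u hu).1) hchmax.le)
    rw [setIntegral_const] at this
    calc I ≤ m • (chmax * cgmax) := this
      _ = m * (cgmax * chmax) := by rw [smul_eq_mul]; ring
  have hI_pos : 0 < I := lt_of_lt_of_le (by positivity) hlow
  have hnum_low : cgmin * chmin ≤ H θ * G x θ := by
    nlinarith [(hH_bdd θ hθ).1, (hG_bdd x θ hθ).1]
  have hnum_high : H θ * G x θ ≤ cgmax * chmax := by
    nlinarith [(hH_bdd θ hθ).1, (hG_bdd x θ hθ).1, (hH_bdd θ hθ).2, (hG_bdd x θ hθ).2]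
  refine ⟨div_le_div₀ ((mul_pos hcgmin hchmin).le.trans hnum_low) hnum_low hI_pos hhigh,
    div_le_div₀ (by positivity) hnum_high (by positivity) hlow⟩
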